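/- The five PYRAMID vectors ψ_j = v_j ⊗ v_{2j mod 5}, j = 0,…,4, with v_j = N(cos(2πj/5), sin(2πj/5), h), h = (1/2)√(1+√5), N = 2/√(5+√5), form an orthonormal set in ℂ³ ⊗ ℂ³. -/
import Mathlib


open Matrix ComplexOrder

/-- The PYRAMID unit vectors `v_j` in `ℝ³ ⊂ ℂ³`. -/
noncomputable def pyr (j : Fin 5) : Fin 3 → ℂ :=
  (↑(2 / Real.sqrt (5 + Real.sqrt 5)) : ℂ) •
    ![(Real.cos (2 * Real.pi * (j : ℕ) / 5) : ℂ),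
      (Real.sin (2 * Real.pi * (j : ℕ) / 5) : ℂ),
      ((1 / 2) * Real.sqrt (1 + Real.sqrt 5) : ℂ)]

/-- The PYRAMID UPB vectors `ψ_j = v_j ⊗ v_{2j mod 5}` in `ℂ³ ⊗ ℂ³`. -/
noncomputable def pyramid (j : Fin 5) : Fin 3 × Fin 3 → ℂ :=
  fun p => pyr j p.1 * pyr (2 * j) p.2

open Real

lemma pyrAux.s5 : Real.sqrt 5 ^ 2 = 5 := Real.sq_sqrt (by norm_num)
lemma pyrAux.s15 : Real.sqrt (1 + Real.sqrt 5) ^ 2 = 1 + Real.sqrt 5 :=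
  Real.sq_sqrt (by positivity)
lemma pyrAux.s55 : Real.sqrt (5 + Real.sqrt 5) ^ 2 = 5 + Real.sqrt 5 :=
  Real.sq_sqrt (by positivity)
lemma pyrAux.pos55 : (0:ℝ) < 5 + Real.sqrt 5 := by positivity

lemma pyrAux.pyrInner (a b : Fin 5) :
    (∑ x : Fin 3, (starRingEnd ℂ) (pyr a x) * pyr b x) =
    ((4 / (5 + Real.sqrt 5)) *
      (Real.cos (2 * Real.pi * (a : ℕ) / 5 - 2 * Real.pi * (b : ℕ) / 5)
        + (1 + Real.sqrt 5) / 4) : ℝ) := by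
  simp only [pyr, Fin.sum_univ_three, Pi.smul_apply, smul_eq_mul, Matrix.cons_val_zero,
    Matrix.cons_val_one, Matrix.head_cons, Matrix.cons_val_two, Matrix.tail_cons,
    RingHom.map_mul, Complex.conj_ofReal, map_div₀, _root_.map_one, map_ofNat,
    ← Complex.ofReal_ofNat, ← Complex.ofReal_one, ← Complex.ofReal_div,
    ← Complex.ofReal_mul, ← Complex.ofReal_add]
  rw [Complex.ofReal_inj]
  rw [Real.cos_sub]
  have hs := pyrAux.s55
  have hh := pyrAux.s15
  have h0 := pyrAux.pos55
  field_simp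
  ring_nf
  rw [hs, hh]
  ring

lemma pyrAux.split (i j : Fin 5) :
    (∑ p : Fin 3 × Fin 3, (starRingEnd ℂ) (pyramid i p) * pyramid j p) =
    (∑ x : Fin 3, (starRingEnd ℂ) (pyr i x) * pyr j x) *
      (∑ y : Fin 3, (starRingEnd ℂ) (pyr (2*i) y) * pyr (2*j) y) := by
  rw [Fintype.sum_prod_type, Finset.sum_mul_sum]
  refine Finset.sum_congr rfl fun x _ => Finset.sum_congr rfl fun y _ => ?_
  simp only [pyramid, RingHom.map_mul]
  ring

lemma pyrAux.cos_two_pi_div_five : Real.cos (2 * π / 5) = (Real.sqrt 5 - 1) / 4 := by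
  have h := Real.cos_pi_div_five
  have : (2 * π / 5 : ℝ) = 2 * (π / 5) := by ring
  rw [this, Real.cos_two_mul, h]
  nlinarith [pyrAux.s5]

lemma pyrAux.cos_four_pi_div_five : Real.cos (4 * π / 5) = -((1 + Real.sqrt 5) / 4) := by
  have : (4 * π / 5 : ℝ) = π - π / 5 := by ring
  rw [this, Real.cos_pi_sub, Real.cos_pi_div_five]

lemma pyrAux.cosk (k : ℤ) : Real.cos (k * (2 * π / 5)) =
    if k % 5 = 0 then 1
    else if k % 5 = 1 ∨ k % 5 = 4 then (Real.sqrt 5 - 1) / 4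
    else -((1 + Real.sqrt 5) / 4) := by
  have key : (k : ℝ) * (2 * π / 5) = (k % 5 : ℤ) * (2 * π / 5) + (k / 5 : ℤ) * (2 * π) := by
    have h := Int.emod_add_mul_ediv k 5
    have : (k : ℝ) = ((k % 5 : ℤ) : ℝ) + 5 * ((k / 5 : ℤ) : ℝ) := by
      exact_mod_cast congrArg (fun n : ℤ => (n : ℝ)) h.symm
    rw [this]; ring
  rw [key, Real.cos_add_int_mul_two_pi]
  have h5 : k % 5 = 0 ∨ k % 5 = 1 ∨ k % 5 = 2 ∨ k % 5 = 3 ∨ k % 5 = 4 := by omega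
  rcases h5 with h | h | h | h | h <;> rw [h] <;> norm_num
  · exact pyrAux.cos_two_pi_div_five
  · have : (2:ℝ) * (2 * π / 5) = 4 * π / 5 := by ring
    rw [this]; exact pyrAux.cos_four_pi_div_five
  · have : (3:ℝ) * (2 * π / 5) = 2 * π - 4 * π / 5 := by ring
    rw [this, Real.cos_two_pi_sub]; exact pyrAux.cos_four_pi_div_five
  · have : (4:ℝ) * (2 * π / 5) = 2 * π - 2 * π / 5 := by ring
    rw [this, Real.cos_two_pi_sub]; exact pyrAux.cos_two_pi_div_five

lemma pyrAux.factor (a b : Fin 5) :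
    ((4 / (5 + Real.sqrt 5)) *
      (Real.cos (2 * Real.pi * (a : ℕ) / 5 - 2 * Real.pi * (b : ℕ) / 5)
        + (1 + Real.sqrt 5) / 4) : ℝ) =
    if ((a : ℤ) - (b : ℤ)) % 5 = 0 then 1
    else if ((a : ℤ) - (b : ℤ)) % 5 = 1 ∨ ((a : ℤ) - (b : ℤ)) % 5 = 4 then
      2 * Real.sqrt 5 / (5 + Real.sqrt 5)
    else 0 := by
  rw [show (2 * Real.pi * ((a : ℕ) : ℝ) / 5 - 2 * Real.pi * ((b : ℕ) : ℝ) / 5)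
      = (((a : ℤ) - (b : ℤ) : ℤ) : ℝ) * (2 * π / 5) by push_cast; ring]
  rw [pyrAux.cosk]
  have h0 := pyrAux.pos55
  split_ifs with h1 h2
  · field_simp; ring
  · field_simp; ring
  · ring

/-- The PYRAMID vectors form an orthonormal set. -/
theorem pyramid_orthonormal :
    ∀ i j : Fin 5,
      (∑ p : Fin 3 × Fin 3, (starRingEnd ℂ) (pyramid i p) * pyramid j p) =
        if i = j then 1 else 0 := by
  intro i j
  rw [pyrAux.split, pyrAux.pyrInner, pyrAux.pyrInner, ← Complex.ofReal_mul,
    pyrAux.factor, pyrAux.factor]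
  fin_cases i <;> fin_cases j <;> norm_num [Fin.ext_iff, Fin.val_mul]
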